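/- Let V be a 3×3 symmetric positive semidefinite real matrix with entries c_{ij}, and let Q = (c_{ij})_{1≤i,j≤2}. If det(Q) = 0 and c_{11} > 0 and c_{22} > 0, then c_{00} - c_{01}²/c_{11} = c_{00} - c_{02}²/c_{22}, and this common value equals the generalized Schur complement q* = c_{00} - (c_{01}, c_{02}) Q⁻ (c_{10}, c_{20})ᵀ for any generalized inverse Q⁻ of Q. -/

import Mathlib

open Matrix

/-- when `det Q = 0`, `c₁₁ > 0`, `c₂₂ > 0`, the two one-variable Schur
complements agree and equal the generalized Schur complement for any g-inverse of `Q`. -/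
theorem schur_complement_degenerate_case
    (V : Matrix (Fin 3) (Fin 3) ℝ) (hV : V.PosSemidef)
    (hdet : (V.submatrix Fin.succ Fin.succ).det = 0)
    (h11 : 0 < V 1 1) (h22 : 0 < V 2 2) :
    V 0 0 - (V 0 1) ^ 2 / V 1 1 = V 0 0 - (V 0 2) ^ 2 / V 2 2 ∧
    ∀ Qg : Matrix (Fin 2) (Fin 2) ℝ,
      (V.submatrix Fin.succ Fin.succ) * Qg * (V.submatrix Fin.succ Fin.succ)
          = V.submatrix Fin.succ Fin.succ →
      V 0 0 - (fun i : Fin 2 => V 0 i.succ) ⬝ᵥ Qg.mulVec (fun i : Fin 2 => V i.succ 0)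
        = V 0 0 - (V 0 1) ^ 2 / V 1 1 := by
  have hsym : ∀ i j, V i j = V j i := fun i j => by
    have := congrFun (congrFun hV.isHermitian j) i
    simpa using this
  have hd : V 1 2 * V 1 2 = V 1 1 * V 2 2 := by
    have := hdet
    rw [Matrix.det_fin_two] at this
    simp only [Matrix.submatrix_apply, Fin.succ_zero_eq_one, Fin.succ_one_eq_two] at this
    have e21 : V 2 1 = V 1 2 := hsym 2 1
    linear_combination -this - V 1 2 * e21
  -- null vector
  have hx : V *ᵥ ![0, V 1 2, -(V 1 1)] = 0 := by
    apply (hV.dotProduct_mulVec_zero_iff _).mp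
    simp [dotProduct, mulVec, Fin.sum_univ_three]
    linear_combination (-(V 1 1 * V 1 2)) * (hsym 2 1) - V 1 1 * hd
  have hb : V 0 1 * V 1 2 = V 0 2 * V 1 1 := by
    have := congrFun hx 0
    simp [mulVec, dotProduct, Fin.sum_univ_three] at this
    linarith
  have key : V 0 1 ^ 2 * V 2 2 = V 0 2 ^ 2 * V 1 1 := by
    have h2 : V 1 1 * (V 0 1 ^ 2 * V 2 2) = V 1 1 * (V 0 2 ^ 2 * V 1 1) := by
      linear_combination (V 0 1 * V 1 2 + V 0 2 * V 1 1) * hb - V 0 1 ^ 2 * hd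
    exact mul_left_cancel₀ (ne_of_gt h11) h2
  constructor
  · have : V 0 1 ^ 2 / V 1 1 = V 0 2 ^ 2 / V 2 2 := by
      field_simp
      linear_combination key
    linarith
  · intro Qg hQg
    have hE := congrFun (congrFun hQg 0) 0
    simp only [Matrix.mul_apply, Matrix.submatrix_apply, Fin.sum_univ_two, Fin.succ_zero_eq_one, Fin.succ_one_eq_two] at hE
    have e21 : V 2 1 = V 1 2 := hsym 2 1
    have e10 : V 1 0 = V 0 1 := hsym 1 0
    have e20 : V 2 0 = V 0 2 := hsym 2 0
    have hc2 : V 0 2 = V 0 1 * V 1 2 / V 1 1 := by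
      field_simp
      linarith [hb]
    have ha := ne_of_gt h11
    simp only [dotProduct, mulVec, Fin.sum_univ_two, Fin.succ_zero_eq_one, Fin.succ_one_eq_two]
    rw [e21] at hE
    rw [e10, e20, hc2]
    field_simp
    linear_combination (-(V 0 1 ^ 2)) * hE
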